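/- arXiv:1607.01235 — 2 statements merged into one kernel-verified Lean document; each statement's English description precedes it below -/
import Mathlib

section
/- Let p ≥ 2 be a real number and n ≥ 1. For every x, y ∈ ℝⁿ one has (|x|^(p−2) x − |y|^(p−2) y) · (x − y) ≥ (2 / (p (2^(p−1) − 1))) |x − y|^p, where · denotes the Euclidean inner product and |·| the Euclidean norm. -/
open scoped RealInnerProductSpace
open Filter Finset Topology

section Aux

variable {E : Type*} [NormedAddCommGroup E] [InnerProductSpace ℝ E]

/-- Scalar convexity: `b^q ≥ a^q + q a^(q-1) (b - a)` for `a, b ≥ 0`, `q > 1`. -/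
lemma chab_scalar_convex {q a b : ℝ} (hq : 1 < q) (ha : 0 ≤ a) (hb : 0 ≤ b) :
    a ^ q + q * a ^ (q - 1) * (b - a) ≤ b ^ q := by
  rcases ha.eq_or_lt with h | h
  · rw [← h, Real.zero_rpow (by linarith), Real.zero_rpow (by linarith : q - 1 ≠ 0)]
    simpa using Real.rpow_nonneg hb q
  · have hba : -1 ≤ b / a - 1 := by
      have := div_nonneg hb h.le; linarith
    have hber := one_add_mul_self_le_rpow_one_add hba hq.le
    have h1 : (1 : ℝ) + (b / a - 1) = b / a := by ring
    rw [h1, Real.div_rpow hb h.le] at hber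
    have haq : (0:ℝ) < a ^ q := Real.rpow_pos_of_pos h q
    have h2 := mul_le_mul_of_nonneg_left hber haq.le
    have h3 : a ^ q * (b ^ q / a ^ q) = b ^ q := by field_simp
    have h4 : a ^ (q - 1) = a ^ q / a := by
      rw [Real.rpow_sub h, Real.rpow_one]
    rw [h3] at h2
    calc a ^ q + q * a ^ (q - 1) * (b - a)
        = a ^ q * (1 + q * (b / a - 1)) := by
          rw [h4]; field_simp
      _ ≤ b ^ q := h2

/-- Gradient inequality for `F z = ‖z‖^p`. -/
lemma chab_grad {p : ℝ} (hp : 2 ≤ p) (a u : E) :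
    ‖a‖ ^ p + p * ‖a‖ ^ (p - 2) * ⟪a, u⟫ ≤ ‖a + u‖ ^ p := by
  rcases eq_or_ne a 0 with rfl | ha
  · simp only [inner_zero_left, norm_zero, mul_zero, add_zero,
      Real.zero_rpow (by linarith : p ≠ 0), zero_add]
    positivity
  · have hna : 0 < ‖a‖ := norm_pos_iff.mpr ha
    have h2 : ⟪a, a + u⟫ ≤ ‖a‖ * ‖a + u‖ := real_inner_le_norm _ _
    have h1 : ⟪a, u⟫ = ⟪a, a + u⟫ - ‖a‖ ^ 2 := by
      rw [inner_add_right, real_inner_self_eq_norm_sq]; ring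
    have hA : (0:ℝ) < ‖a‖ ^ (p - 2) := Real.rpow_pos_of_pos hna _
    have hkey : ‖a‖ ^ (p - 2) * ‖a‖ = ‖a‖ ^ (p - 1) := by
      rw [show p - 1 = p - 2 + 1 by ring, Real.rpow_add hna, Real.rpow_one]
    have h3 : p * ‖a‖ ^ (p - 2) * ⟪a, u⟫ ≤ p * ‖a‖ ^ (p - 1) * (‖a + u‖ - ‖a‖) := by
      have hp0 : (0:ℝ) < p := by linarith
      have step : ⟪a, u⟫ ≤ ‖a‖ * (‖a + u‖ - ‖a‖) := by nlinarith [h1, h2]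
      calc p * ‖a‖ ^ (p - 2) * ⟪a, u⟫
          ≤ p * ‖a‖ ^ (p - 2) * (‖a‖ * (‖a + u‖ - ‖a‖)) := by
            apply mul_le_mul_of_nonneg_left step (by positivity)
        _ = p * ‖a‖ ^ (p - 1) * (‖a + u‖ - ‖a‖) := by
            rw [← hkey]; ring
    have h4 := chab_scalar_convex (q := p) (a := ‖a‖) (b := ‖a + u‖)
      (by linarith) hna.le (norm_nonneg _)
    linarith

/-- Clarkson-type inequality in a real inner product space, `p ≥ 2`. -/
lemma chab_clarkson {p : ℝ} (hp : 2 ≤ p) (u w : E) :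
    ‖(2:ℝ)⁻¹ • (u + w)‖ ^ p + ‖(2:ℝ)⁻¹ • (u - w)‖ ^ p ≤ (‖u‖ ^ p + ‖w‖ ^ p) / 2 := by
  set A := ‖(2:ℝ)⁻¹ • (u + w)‖ with hAdef
  set B := ‖(2:ℝ)⁻¹ • (u - w)‖ with hBdef
  have hA : 0 ≤ A := norm_nonneg _
  have hB : 0 ≤ B := norm_nonneg _
  have hq : (1:ℝ) ≤ p / 2 := by linarith
  have hpar : A ^ 2 + B ^ 2 = (‖u‖ ^ 2 + ‖w‖ ^ 2) / 2 := by
    have hpl := parallelogram_law_with_norm ℝ u w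
    have h1 : A = 2⁻¹ * ‖u + w‖ := by rw [hAdef, norm_smul]; norm_num
    have h2 : B = 2⁻¹ * ‖u - w‖ := by rw [hBdef, norm_smul]; norm_num
    rw [h1, h2]; nlinarith [hpl]
  have sq_rpow : ∀ c : ℝ, 0 ≤ c → (c ^ 2) ^ (p / 2) = c ^ p := by
    intro c hc
    rw [← Real.rpow_natCast c 2, ← Real.rpow_mul hc,
      show ((2:ℕ):ℝ) * (p / 2) = p by push_cast; ring]
  -- superadditivity : A^p + B^p ≤ (A² + B²)^(p/2)
  have superadd : ∀ a b : ℝ, 0 ≤ a → 0 ≤ b → a ^ (p/2) + b ^ (p/2) ≤ (a + b) ^ (p/2) := by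
    intro a b ha hb
    rcases eq_or_lt_of_le (add_nonneg ha hb) with h0 | h0
    · have ha0 : a = 0 := by linarith
      have hb0 : b = 0 := by linarith
      simp [ha0, hb0, Real.zero_rpow (by positivity : p/2 ≠ 0)]
    · have hq1 : a ^ (p/2) ≤ a * (a + b) ^ (p/2 - 1) := by
        rcases ha.eq_or_lt with h | h
        · rw [← h, Real.zero_rpow (by positivity : p/2 ≠ 0)]; positivity
        · calc a ^ (p/2) = a * a ^ (p/2 - 1) := by
                rw [← Real.rpow_one_add' (by positivity) (by intro hc; simp at hc; linarith)]
                norm_num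
            _ ≤ a * (a + b) ^ (p/2 - 1) := by
                apply mul_le_mul_of_nonneg_left _ ha
                exact Real.rpow_le_rpow h.le (by linarith) (by linarith)
      have hq2 : b ^ (p/2) ≤ b * (a + b) ^ (p/2 - 1) := by
        rcases hb.eq_or_lt with h | h
        · rw [← h, Real.zero_rpow (by positivity : p/2 ≠ 0)]; positivity
        · calc b ^ (p/2) = b * b ^ (p/2 - 1) := by
                rw [← Real.rpow_one_add' (by positivity) (by intro hc; simp at hc; linarith)]
                norm_num
            _ ≤ b * (a + b) ^ (p/2 - 1) := by
                apply mul_le_mul_of_nonneg_left _ hb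
                exact Real.rpow_le_rpow h.le (by linarith) (by linarith)
      have : a * (a + b) ^ (p/2 - 1) + b * (a + b) ^ (p/2 - 1) = (a + b) ^ (p/2) := by
        rw [← add_mul, ← Real.rpow_one_add' (by positivity) (by intro hc; linarith)]
        norm_num
      linarith
  have convx : ((‖u‖ ^ 2 + ‖w‖ ^ 2) / 2) ^ (p/2)
      ≤ ((‖u‖ ^ 2) ^ (p/2) + (‖w‖ ^ 2) ^ (p/2)) / 2 := by
    have hcv := (convexOn_rpow hq).2 (Set.mem_Ici.mpr (sq_nonneg ‖u‖))
      (Set.mem_Ici.mpr (sq_nonneg ‖w‖)) (by norm_num : (0:ℝ) ≤ (1:ℝ)/2)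
      (by norm_num : (0:ℝ) ≤ (1:ℝ)/2) (by norm_num)
    simp only [smul_eq_mul] at hcv
    calc ((‖u‖ ^ 2 + ‖w‖ ^ 2) / 2) ^ (p/2)
        = ((1:ℝ)/2 * ‖u‖ ^ 2 + (1:ℝ)/2 * ‖w‖ ^ 2) ^ (p/2) := by ring_nf
      _ ≤ (1:ℝ)/2 * (‖u‖ ^ 2) ^ (p/2) + (1:ℝ)/2 * (‖w‖ ^ 2) ^ (p/2) := hcv
      _ = ((‖u‖ ^ 2) ^ (p/2) + (‖w‖ ^ 2) ^ (p/2)) / 2 := by ring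
  calc A ^ p + B ^ p = (A ^ 2) ^ (p/2) + (B ^ 2) ^ (p/2) := by
        rw [sq_rpow A hA, sq_rpow B hB]
    _ ≤ (A ^ 2 + B ^ 2) ^ (p/2) := superadd _ _ (sq_nonneg _) (sq_nonneg _)
    _ = ((‖u‖ ^ 2 + ‖w‖ ^ 2) / 2) ^ (p/2) := by rw [hpar]
    _ ≤ ((‖u‖ ^ 2) ^ (p/2) + (‖w‖ ^ 2) ^ (p/2)) / 2 := convx
    _ = (‖u‖ ^ p + ‖w‖ ^ p) / 2 := by
        rw [sq_rpow _ (norm_nonneg u), sq_rpow _ (norm_nonneg w)]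

/-- Lindqvist's inequality: for `p ≥ 2`,
`‖a + v‖^p ≥ ‖a‖^p + p ‖a‖^(p-2) ⟪a, v⟫ + ‖v‖^p / (2^(p-1) - 1)`. -/
lemma chab_lindqvist {p : ℝ} (hp : 2 ≤ p) (a v : E) :
    ‖a‖ ^ p + p * ‖a‖ ^ (p - 2) * ⟪a, v⟫ + ‖v‖ ^ p / ((2:ℝ) ^ (p - 1) - 1)
      ≤ ‖a + v‖ ^ p := by
  set g : ℝ → ℝ := fun t => ‖a + t • v‖ ^ p with hg
  set M : ℝ := ‖v‖ ^ p with hM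
  set r : ℝ := (2:ℝ) ^ (1 - p) with hr
  have hM0 : 0 ≤ M := Real.rpow_nonneg (norm_nonneg v) p
  have hr0 : 0 < r := Real.rpow_pos_of_pos two_pos _
  have hr1 : r < 1 := Real.rpow_lt_one_of_one_lt_of_neg one_lt_two (by linarith)
  have hg0 : g 0 = ‖a‖ ^ p := by simp [hg]
  have hg1 : g 1 = ‖a + v‖ ^ p := by simp [hg]
  -- midpoint inequality
  have mid : ∀ t : ℝ, 0 < t → g (t / 2) + (t / 2) ^ p * M ≤ (g 0 + g t) / 2 := by
    intro t ht
    have hc := chab_clarkson hp a (a + t • v)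
    have e1 : (2:ℝ)⁻¹ • (a + (a + t • v)) = a + (t / 2) • v := by
      match_scalars <;> ring
    have e2 : (2:ℝ)⁻¹ • (a - (a + t • v)) = -((t / 2) • v) := by
      match_scalars <;> ring
    rw [e1, e2, norm_neg, norm_smul] at hc
    have e3 : ‖(t / 2 : ℝ)‖ = t / 2 := by
      rw [Real.norm_eq_abs, abs_of_pos (by linarith)]
    rw [e3, Real.mul_rpow (by linarith) (norm_nonneg v)] at hc
    simpa [hg, hM] using hc
  -- key induction
  have key : ∀ K : ℕ, (2:ℝ) ^ K * (g ((1/2) ^ K) - g 0)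
      + M * ∑ j ∈ range K, r ^ (j + 1) ≤ g 1 - g 0 := by
    intro K
    induction K with
    | zero => simp
    | succ K ih =>
      have ht : (0:ℝ) < (1/2 : ℝ) ^ K := by positivity
      have hmid := mid ((1/2) ^ K) ht
      have hhalf : ((1/2:ℝ) ^ K) / 2 = (1/2:ℝ) ^ (K + 1) := by
        rw [pow_succ]; ring
      rw [hhalf] at hmid
      have hrpow : (2:ℝ) ^ (K + 1) * ((1/2:ℝ) ^ (K + 1)) ^ p = r ^ (K + 1) := by
        have hb : ((1/2:ℝ)) ^ (K + 1) = (2:ℝ) ^ (-(((K+1 : ℕ)):ℝ)) := by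
          rw [Real.rpow_neg (by norm_num), Real.rpow_natCast, div_pow, one_pow, one_div]
        rw [hb, ← Real.rpow_natCast (2:ℝ) (K+1), ← Real.rpow_natCast r (K+1), hr,
          ← Real.rpow_mul (by norm_num : (0:ℝ) ≤ 2),
          ← Real.rpow_mul (by norm_num : (0:ℝ) ≤ 2),
          ← Real.rpow_add (by norm_num : (0:ℝ) < 2)]
        congr 1
        push_cast
        ring
      have step : (2:ℝ) ^ (K+1) * (g ((1/2) ^ (K+1)) - g 0) + r ^ (K+1) * M
          ≤ (2:ℝ) ^ K * (g ((1/2) ^ K) - g 0) := by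
        have h2K1 : (0:ℝ) < (2:ℝ) ^ (K+1) := by positivity
        have h3 := mul_le_mul_of_nonneg_left hmid h2K1.le
        have e : (2:ℝ) ^ (K+1) * (g ((1/2) ^ (K+1)) + ((1/2:ℝ) ^ (K+1)) ^ p * M)
            = (2:ℝ) ^ (K+1) * g ((1/2) ^ (K+1)) + r ^ (K+1) * M := by
          rw [mul_add, ← mul_assoc, hrpow]
        have e2 : (2:ℝ) ^ (K+1) * ((g 0 + g ((1/2) ^ K)) / 2)
            = (2:ℝ) ^ K * g 0 + (2:ℝ) ^ K * g ((1/2) ^ K) := by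
          rw [pow_succ]; ring
        rw [e, e2] at h3
        have hps : (2:ℝ) ^ (K+1) = 2 * (2:ℝ) ^ K := by rw [pow_succ]; ring
        rw [hps] at h3 ⊢
        nlinarith [h3]
      have esum : ∑ j ∈ range (K+1), r ^ (j + 1)
          = (∑ j ∈ range K, r ^ (j + 1)) + r ^ (K + 1) := by
        rw [Finset.sum_range_succ]
      rw [esum]
      nlinarith [step, ih]
  -- lower bound on the remainder term via the gradient inequality
  have rem : ∀ K : ℕ, p * ‖a‖ ^ (p - 2) * ⟪a, v⟫
      ≤ (2:ℝ) ^ K * (g ((1/2) ^ K) - g 0) := by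
    intro K
    have hgr := chab_grad hp a (((1/2:ℝ) ^ K) • v)
    rw [real_inner_smul_right] at hgr
    have h1 : (1/2:ℝ) ^ K * (p * ‖a‖ ^ (p - 2) * ⟪a, v⟫) ≤ g ((1/2) ^ K) - g 0 := by
      rw [hg0]; simp only [hg]; nlinarith [hgr]
    have h2K : (0:ℝ) < (2:ℝ) ^ K := by positivity
    have h2 := mul_le_mul_of_nonneg_left h1 h2K.le
    have hcancel : (2:ℝ) ^ K * ((1/2:ℝ) ^ K * (p * ‖a‖ ^ (p - 2) * ⟪a, v⟫))
        = p * ‖a‖ ^ (p - 2) * ⟪a, v⟫ := by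
      rw [← mul_assoc, ← mul_pow]; norm_num
    rw [hcancel] at h2
    linarith [h2]
  -- geometric series limit
  have hsum : Tendsto (fun K => ∑ j ∈ range K, r ^ (j + 1)) atTop (𝓝 (r / (1 - r))) := by
    have h := (hasSum_geometric_of_lt_one hr0.le hr1).tendsto_sum_nat
    have e : ∀ K : ℕ, ∑ j ∈ range K, r ^ (j + 1) = r * ∑ j ∈ range K, r ^ j := by
      intro K; rw [Finset.mul_sum]
      apply Finset.sum_congr rfl; intro j _; rw [pow_succ]; ring
    simp only [e]
    simpa [div_eq_mul_inv] using h.const_mul r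
  have final : M * (r / (1 - r)) ≤ g 1 - g 0 - p * ‖a‖ ^ (p - 2) * ⟪a, v⟫ := by
    apply le_of_tendsto (hsum.const_mul M)
    filter_upwards with K
    have hk := key K
    have hrm := rem K
    linarith
  -- identify r / (1 - r) with 1 / (2^(p-1) - 1)
  have hprod : r * (2:ℝ) ^ (p - 1) = 1 := by
    rw [hr, ← Real.rpow_add two_pos]
    norm_num
  have hc1 : (1:ℝ) < (2:ℝ) ^ (p - 1) := by
    rw [show (1:ℝ) = (2:ℝ) ^ (0:ℝ) by simp]
    exact Real.rpow_lt_rpow_left_iff one_lt_two |>.mpr (by linarith)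
  have hrr : r / (1 - r) = 1 / ((2:ℝ) ^ (p - 1) - 1) := by
    have hc0 : (2:ℝ) ^ (p - 1) ≠ 0 := by positivity
    have hcm : (2:ℝ) ^ (p - 1) - 1 ≠ 0 := by linarith
    have hrv : r = 1 / (2:ℝ) ^ (p - 1) := by
      field_simp
      linarith [hprod]
    rw [hrv]
    field_simp
  rw [hrr] at final
  have : M / ((2:ℝ) ^ (p - 1) - 1) = M * (1 / ((2:ℝ) ^ (p - 1) - 1)) := by ring
  rw [hg0, hg1] at final
  rw [hM] at final
  linarith [final]

end Aux

/-- For `p ≥ 2` and `x, y ∈ ℝⁿ`,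
`(|x|^(p-2) x − |y|^(p-2) y) · (x − y) ≥ (2 / (p (2^(p-1) − 1))) |x − y|^p`. -/
theorem chabrowski_inequality
    (n : ℕ) (hn : 1 ≤ n) (p : ℝ) (hp : 2 ≤ p)
    (x y : EuclideanSpace ℝ (Fin n)) :
    ⟪(‖x‖ ^ (p - 2)) • x - (‖y‖ ^ (p - 2)) • y, x - y⟫ ≥
      (2 / (p * (2 ^ (p - 1) - 1))) * ‖x - y‖ ^ p := by
  have h1 := chab_lindqvist (E := EuclideanSpace ℝ (Fin n)) hp y (x - y)
  have h2 := chab_lindqvist (E := EuclideanSpace ℝ (Fin n)) hp x (y - x)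
  rw [show y + (x - y) = x by abel] at h1
  rw [show x + (y - x) = y by abel] at h2
  rw [show ‖y - x‖ = ‖x - y‖ from norm_sub_rev _ _] at h2
  have hinner2 : ⟪x, y - x⟫ = -⟪x, x - y⟫ := by
    rw [← inner_neg_right]; congr 1; abel
  rw [hinner2] at h2
  have hc1 : (1:ℝ) < (2:ℝ) ^ (p - 1) := by
    rw [show (1:ℝ) = (2:ℝ) ^ (0:ℝ) by simp]
    exact Real.rpow_lt_rpow_left_iff one_lt_two |>.mpr (by linarith)
  have hcpos : (0:ℝ) < (2:ℝ) ^ (p - 1) - 1 := by linarith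
  have hp0 : (0:ℝ) < p := by linarith
  rw [ge_iff_le, inner_sub_left, real_inner_smul_left, real_inner_smul_left]
  set c := (2:ℝ) ^ (p - 1) with hcdef
  set d := ‖x - y‖ ^ p / (c - 1) with hddef
  have hT : 2 * d ≤ p * (‖x‖ ^ (p - 2) * ⟪x, x - y⟫ - ‖y‖ ^ (p - 2) * ⟪y, x - y⟫) := by
    nlinarith [h1, h2]
  rw [div_mul_eq_mul_div, div_le_iff₀ (by positivity)]
  have hMd : d * (c - 1) = ‖x - y‖ ^ p := div_mul_cancel₀ _ (ne_of_gt hcpos)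
  have hmul := mul_le_mul_of_nonneg_right hT hcpos.le
  nlinarith [hmul, hMd]
end

section
/- Let p ≥ 2 be a real number and let f : ℝ → ℝ be continuous with lim_{t→0} f(t)/|t|^(p−1) = 0 and lim_{|t|→+∞} f(t)/|t|^(p−1) = 0, and set F(t) = ∫₀ᵗ f(s) ds. Then for every ε > 0 and every η > 0 there exists a constant M_ε ≥ 0 such that |F(t)| ≤ (ε/p) |t|^p + (M_ε/(p+η)) |t|^(p+η) for all t ∈ ℝ. -/
open Filter

/-- Pointwise bound on `f` from the two limit conditions. -/
lemma prim_aux_bound (p : ℝ) (hp : 2 ≤ p) (f : ℝ → ℝ) (hf : Continuous f)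
    (hf1 : Tendsto (fun t : ℝ => f t / |t| ^ (p - 1)) (nhdsWithin 0 {0}ᶜ) (nhds 0))
    (hf2 : Tendsto (fun t : ℝ => f t / |t| ^ (p - 1)) (atTop ⊔ atBot) (nhds 0))
    (ε η : ℝ) (hε : 0 < ε) (hη : 0 < η) :
    ∃ C : ℝ, 0 ≤ C ∧ ∀ t : ℝ, |f t| ≤ ε * |t| ^ (p - 1) + C * |t| ^ (p + η - 1) := by
  have hp1 : (0 : ℝ) < p - 1 := by linarith
  have hq : (0 : ℝ) < p + η - 1 := by linarith
  -- continuity of the weight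
  have hwc : Continuous (fun t : ℝ => |t| ^ (p - 1)) :=
    (Real.continuous_rpow_const hp1.le).comp continuous_abs
  -- the small-region bound
  have hf10 := hf1
  rw [Metric.tendsto_nhdsWithin_nhds] at hf1
  obtain ⟨δ, hδ, hsmall⟩ := hf1 ε hε
  -- the large-region bound
  have hlarge := Metric.tendsto_nhds.mp hf2 1 one_pos
  rw [eventually_sup] at hlarge
  obtain ⟨hT, hB⟩ := hlarge
  obtain ⟨A, hA⟩ := eventually_atTop.mp hT
  obtain ⟨B, hB'⟩ := eventually_atBot.mp hB
  set R : ℝ := max (max A (-B)) (max 1 δ) with hR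
  have hR1 : (1 : ℝ) ≤ R := le_trans (le_max_left 1 δ) (le_max_right _ _)
  -- bound on the compact middle region
  obtain ⟨K, hK⟩ := (isCompact_Icc (a := -R) (b := R)).exists_bound_of_continuousOn
    hf.continuousOn
  have hK0 : 0 ≤ K := by
    have h0 : (0 : ℝ) ∈ Set.Icc (-R) R := by
      constructor <;> nlinarith
    exact le_trans (norm_nonneg _) (hK 0 h0)
  set C : ℝ := max 1 (K / δ ^ (p + η - 1)) with hCdef
  have hC1 : (1 : ℝ) ≤ C := le_max_left _ _
  have hC0 : (0 : ℝ) ≤ C := by linarith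
  refine ⟨C, hC0, fun t => ?_⟩
  have htw : (0 : ℝ) ≤ |t| ^ (p - 1) := Real.rpow_nonneg (abs_nonneg t) _
  have htq : (0 : ℝ) ≤ |t| ^ (p + η - 1) := Real.rpow_nonneg (abs_nonneg t) _
  rcases eq_or_ne t 0 with rfl | ht0
  · -- t = 0 : f 0 = 0 by continuity
    have hf0 : f 0 = 0 := by
      have habs : Tendsto (fun t : ℝ => |t| ^ (p - 1)) (nhdsWithin 0 {0}ᶜ) (nhds 0) := by
        have := hwc.tendsto 0
        simp only [abs_zero, Real.zero_rpow (ne_of_gt hp1)] at this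
        exact this.mono_left nhdsWithin_le_nhds
      have hmul := hf10.mul habs
      rw [mul_zero] at hmul
      have heq : Tendsto f (nhdsWithin 0 {0}ᶜ) (nhds 0) := by
        apply hmul.congr'
        filter_upwards [self_mem_nhdsWithin] with x hx
        have hx0 : |x| ^ (p - 1) ≠ 0 :=
          ne_of_gt (Real.rpow_pos_of_pos (abs_pos.mpr hx) _)
        field_simp
      have hcont : Tendsto f (nhdsWithin 0 {0}ᶜ) (nhds (f 0)) :=
        (hf.tendsto 0).mono_left nhdsWithin_le_nhds
      exact tendsto_nhds_unique hcont heq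
    simp only [hf0, abs_zero, abs_zero]
    positivity
  · have htpos : 0 < |t| := abs_pos.mpr ht0
    have htwpos : 0 < |t| ^ (p - 1) := Real.rpow_pos_of_pos htpos _
    rcases lt_or_ge (|t|) δ with hlt | hge
    · -- small region
      have := hsmall (show t ∈ ({0}ᶜ : Set ℝ) from ht0) (by simpa [Real.dist_eq] using hlt)
      rw [Real.dist_eq, sub_zero, abs_div, abs_of_pos htwpos] at this
      have : |f t| < ε * |t| ^ (p - 1) := by
        rw [div_lt_iff₀ htwpos] at this; linarith
      nlinarith [mul_nonneg hC0 htq]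
    · rcases le_or_gt (|t|) R with hle | hgt
      · -- middle region
        have htIcc : t ∈ Set.Icc (-R) R := by
          rcases abs_le.mp hle with ⟨h1, h2⟩; exact ⟨h1, h2⟩
        have h1 : |f t| ≤ K := by simpa [Real.norm_eq_abs] using hK t htIcc
        have hδq : 0 < δ ^ (p + η - 1) := Real.rpow_pos_of_pos hδ _
        have h2 : δ ^ (p + η - 1) ≤ |t| ^ (p + η - 1) :=
          Real.rpow_le_rpow hδ.le hge hq.le
        have h3 : K ≤ K / δ ^ (p + η - 1) * |t| ^ (p + η - 1) := by
          rw [div_mul_eq_mul_div, le_div_iff₀ hδq]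
          exact mul_le_mul_of_nonneg_left h2 hK0
        have h4 : K / δ ^ (p + η - 1) ≤ C := le_max_right _ _
        have h5 : K / δ ^ (p + η - 1) * |t| ^ (p + η - 1) ≤ C * |t| ^ (p + η - 1) :=
          mul_le_mul_of_nonneg_right h4 htq
        nlinarith [mul_nonneg hε.le htw]
      · -- large region
        have hdist : |f t| / |t| ^ (p - 1) < 1 := by
          rcases lt_abs.mp hgt with h | h
          · have hAt : A ≤ t := le_trans (le_trans (le_max_left A (-B))
              (le_max_left _ _)) h.le
            simpa [Real.dist_eq, abs_div, abs_of_pos htwpos] using hA t hAt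
          · have hBt : t ≤ B := by
              have : -B ≤ R := le_trans (le_max_right A (-B)) (le_max_left _ _)
              linarith
            simpa [Real.dist_eq, abs_div, abs_of_pos htwpos] using hB' t hBt
        rw [div_lt_iff₀ htwpos, one_mul] at hdist
        have hmono : |t| ^ (p - 1) ≤ |t| ^ (p + η - 1) :=
          Real.rpow_le_rpow_of_exponent_le (by linarith : 1 ≤ |t|) (by linarith)
        have : |f t| ≤ C * |t| ^ (p + η - 1) := by
          calc |f t| ≤ |t| ^ (p - 1) := hdist.le
            _ ≤ |t| ^ (p + η - 1) := hmono
            _ ≤ C * |t| ^ (p + η - 1) := by nlinarith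
        nlinarith [mul_nonneg hε.le htw]

/-- Integral bound for nonnegative endpoint. -/
lemma prim_aux_int (p ε C η : ℝ) (hp : 2 ≤ p) (hε : 0 < ε) (hC : 0 ≤ C) (hη : 0 < η)
    (g : ℝ → ℝ) (hg : Continuous g)
    (hb : ∀ s : ℝ, |g s| ≤ ε * |s| ^ (p - 1) + C * |s| ^ (p + η - 1))
    (t : ℝ) (ht : 0 ≤ t) :
    |∫ s in (0 : ℝ)..t, g s| ≤ ε / p * t ^ p + C / (p + η) * t ^ (p + η) := by
  have hq1 : (-1 : ℝ) < p - 1 := by linarith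
  have hq2 : (-1 : ℝ) < p + η - 1 := by linarith
  have hp0 : (0 : ℝ) < p := by linarith
  have hpη : (0 : ℝ) < p + η := by linarith
  have hint1 : IntervalIntegrable (fun s : ℝ => s ^ (p - 1)) MeasureTheory.volume 0 t :=
    intervalIntegral.intervalIntegrable_rpow' hq1
  have hint2 : IntervalIntegrable (fun s : ℝ => s ^ (p + η - 1)) MeasureTheory.volume 0 t :=
    intervalIntegral.intervalIntegrable_rpow' hq2
  have hintb : IntervalIntegrable (fun s : ℝ => ε * s ^ (p - 1) + C * s ^ (p + η - 1))
      MeasureTheory.volume 0 t := (hint1.const_mul ε).add (hint2.const_mul C)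
  calc |∫ s in (0 : ℝ)..t, g s| ≤ ∫ s in (0 : ℝ)..t, |g s| :=
        intervalIntegral.abs_integral_le_integral_abs ht
    _ ≤ ∫ s in (0 : ℝ)..t, (ε * s ^ (p - 1) + C * s ^ (p + η - 1)) := by
        refine intervalIntegral.integral_mono_on ht (hg.abs.intervalIntegrable _ _) hintb ?_
        intro x hx
        have := hb x
        rwa [abs_of_nonneg hx.1] at this
    _ = (ε * ∫ s in (0 : ℝ)..t, s ^ (p - 1)) + C * ∫ s in (0 : ℝ)..t, s ^ (p + η - 1) := by
        rw [intervalIntegral.integral_add (hint1.const_mul ε) (hint2.const_mul C),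
          intervalIntegral.integral_const_mul, intervalIntegral.integral_const_mul]
    _ = ε / p * t ^ p + C / (p + η) * t ^ (p + η) := by
        rw [integral_rpow (Or.inl hq1), integral_rpow (Or.inl hq2)]
        have e1 : p - 1 + 1 = p := by ring
        have e2 : p + η - 1 + 1 = p + η := by ring
        rw [e1, e2, Real.zero_rpow (ne_of_gt hp0), Real.zero_rpow (ne_of_gt hpη)]
        ring

/-- If `f : ℝ → ℝ` is continuous with `f(t)/|t|^(p-1) → 0` as `t → 0` and as
`|t| → ∞`, and `F(t) = ∫₀ᵗ f(s) ds`, then for every `ε > 0` and `η > 0` there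
is `M_ε ≥ 0` with `|F(t)| ≤ (ε/p)|t|^p + (M_ε/(p+η))|t|^(p+η)` for all `t`. -/
theorem primitive_eps_bound
    (p : ℝ) (hp : 2 ≤ p) (f : ℝ → ℝ) (hf : Continuous f)
    (hf1 : Tendsto (fun t : ℝ => f t / |t| ^ (p - 1)) (nhdsWithin 0 {0}ᶜ) (nhds 0))
    (hf2 : Tendsto (fun t : ℝ => f t / |t| ^ (p - 1)) (atTop ⊔ atBot) (nhds 0))
    (F : ℝ → ℝ) (hF : ∀ t : ℝ, F t = ∫ s in (0 : ℝ)..t, f s) :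
    ∀ ε > (0 : ℝ), ∀ η > (0 : ℝ), ∃ M : ℝ, 0 ≤ M ∧
      ∀ t : ℝ, |F t| ≤ (ε / p) * |t| ^ p + (M / (p + η)) * |t| ^ (p + η) := by
  intro ε hε η hη
  obtain ⟨C, hC0, hCb⟩ := prim_aux_bound p hp f hf hf1 hf2 ε η hε hη
  refine ⟨C, hC0, fun t => ?_⟩
  rw [hF t]
  rcases le_total 0 t with ht | ht
  · have h := prim_aux_int p ε C η hp hε hC0 hη f hf hCb t ht
    rw [abs_of_nonneg ht]
    exact h
  · have hneg : (∫ s in (0 : ℝ)..t, f s) = -∫ x in (0 : ℝ)..(-t), f (-x) := by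
      rw [intervalIntegral.integral_comp_neg (a := 0) (b := -t) (f := f), neg_neg, neg_zero,
        intervalIntegral.integral_symm]
    have hb' : ∀ s : ℝ, |f (-s)| ≤ ε * |s| ^ (p - 1) + C * |s| ^ (p + η - 1) := by
      intro s
      have := hCb (-s)
      rwa [abs_neg] at this
    have := prim_aux_int p ε C η hp hε hC0 hη (fun x => f (-x))
      (hf.comp continuous_neg) hb' (-t) (by linarith)
    rw [hneg, abs_neg, abs_of_nonpos ht]
    exact this
end
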